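/- arXiv:1808.06892 — 3 statements merged into one kernel-verified Lean document; each statement's English description precedes it below -/
import Mathlib

section
/- Let G be a k-inner plane graph that has a good spanning tree T. Then a vertex on the boundary of the outer face of G that is a leaf of T cannot be covered by any edge of G; consequently, for every non-tree edge e, the set C(e) of covered leaves of T contains only inner vertices of G, and hence |C(e)| ≤ k. -/
open scoped Real

/-- A point of the plane. -/
abbrev Pt : Type := ℝ × ℝ

/-- The slope (direction angle, in `[0, 2π)`) of the directed segment from `p` to `q`:
the counter-clockwise angle from the rightward horizontal half-line at `p` to the
half-line from `p` through `q`. -/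
noncomputable def slopeAngle (p q : Pt) : ℝ :=
  if Complex.arg ⟨q.1 - p.1, q.2 - p.2⟩ < 0 then
    Complex.arg ⟨q.1 - p.1, q.2 - p.2⟩ + 2 * Real.pi
  else Complex.arg ⟨q.1 - p.1, q.2 - p.2⟩

/-- The counterclockwise angular gap from direction `a` to direction `b`, in `[0, 2π)`. -/
noncomputable def ccwGap (a b : ℝ) : ℝ :=
  (b - a) - 2 * Real.pi * ⌊(b - a) / (2 * Real.pi)⌋

/-- A rooted tree on the (finite, nonempty) vertex type `V`, encoded by its parent
function: every vertex reaches the root by iterating `parent`, and edges are the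
pairs `(parent v, v)` for `v ≠ root` (directed away from the root). -/
structure RTree (V : Type*) where
  root : V
  parent : V → V
  parent_root : parent root = root
  reaches_root : ∀ v : V, ∃ n : ℕ, parent^[n] v = root

namespace RTree

variable {V : Type*} (T : RTree V)

/-- `u` is a (weak) ancestor of `v`; equivalently, `v` belongs to the subtree `T_u`. -/
def Anc (u v : V) : Prop := ∃ n : ℕ, T.parent^[n] v = u

/-- A leaf of the tree: a vertex with no children. -/
def IsLeaf (v : V) : Prop := ∀ w : V, T.parent w = v → w = v

/-- The tree edges, as unordered pairs. -/
def IsTreeEdge (e : Sym2 V) : Prop := ∃ v : V, v ≠ T.root ∧ e = s(T.parent v, v)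

/-- Adjacency in the tree. -/
def TAdj (a b : V) : Prop := a ≠ b ∧ (T.parent a = b ∨ T.parent b = a)

end RTree

/-- The drawing `D` fits on a `W × H` grid: all vertices are placed at integer grid
points within `[0,W] × [0,H]`. -/
def FitsGrid {V : Type*} (D : V → Pt) (W H : ℕ) : Prop :=
  ∀ v : V, (∃ x : ℤ, (D v).1 = (x : ℝ)) ∧ (∃ y : ℤ, (D v).2 = (y : ℝ)) ∧
    0 ≤ (D v).1 ∧ (D v).1 ≤ (W : ℝ) ∧ 0 ≤ (D v).2 ∧ (D v).2 ≤ (H : ℝ)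

/-- A straight-line drawing of the rooted tree `T` is monotone if every pair of
vertices is connected by a tree path whose orthogonal projections on some line
appear in path order. -/
def MonotoneTreeDrawing {V : Type*} (T : RTree V) (D : V → Pt) : Prop :=
  ∀ u v : V, ∃ (p : List V) (d : Pt), d ≠ 0 ∧
    p.head? = some u ∧ p.getLast? = some v ∧
    p.Chain' T.TAdj ∧
    (p.map fun w => d.1 * (D w).1 + d.2 * (D w).2).Chain' (· < ·)

/-- Non-strictly slope-disjoint drawing of a rooted tree (Oikonomou–Symvonis):
every vertex `u` has an angle range `⟨a1 u, a2 u⟩ ⊆ [0, π]` strictly containing the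
slopes of all edges of `T_u` and of the edge entering `u`, children ranges are nested
in the parent's, and sibling ranges are disjoint except possibly at their boundaries. -/
def NonStrictlySlopeDisjoint {V : Type*} (T : RTree V) (D : V → Pt) : Prop :=
  ∃ a1 a2 : V → ℝ,
    (∀ u : V, 0 ≤ a1 u ∧ a1 u < a2 u ∧ a2 u ≤ Real.pi) ∧
    (∀ u w : V, w ≠ T.root → T.Anc u w →
      a1 u < slopeAngle (D (T.parent w)) (D w) ∧
      slopeAngle (D (T.parent w)) (D w) < a2 u) ∧
    (∀ v : V, v ≠ T.root → a1 (T.parent v) ≤ a1 v ∧ a2 v ≤ a2 (T.parent v)) ∧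
    (∀ u1 u2 : V, u1 ≠ T.root → u2 ≠ T.root → u1 ≠ u2 → T.parent u1 = T.parent u2 →
      a2 u1 ≤ a1 u2 ∨ a2 u2 ≤ a1 u1)

/-- The set of direction angles of the edges incident to `u`, oriented away from `u`. -/
def edgeDirs {V : Type*} (T : RTree V) (D : V → Pt) (u : V) : Set ℝ :=
  {θ | ∃ w : V, T.TAdj u w ∧ θ = slopeAngle (D u) (D w)}

/-- Directions `θ1 ≠ θ2` of edges at `u` are consecutive (in counterclockwise order)
if no other edge direction at `u` lies strictly between them; the angle of the
corresponding wedge is `ccwGap θ1 θ2`. -/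
def ConsecutiveAt {V : Type*} (T : RTree V) (D : V → Pt) (u : V) (θ1 θ2 : ℝ) : Prop :=
  θ1 ∈ edgeDirs T D u ∧ θ2 ∈ edgeDirs T D u ∧ θ1 ≠ θ2 ∧
    ∀ θ ∈ edgeDirs T D u, θ = θ1 ∨ θ = θ2 ∨
      ¬ (0 < ccwGap θ1 θ ∧ ccwGap θ1 θ < ccwGap θ1 θ2)

/-- Near-convex drawing: monotone, and every pair of consecutive edges incident to a
common vertex forms a convex angle (an angle in `(0, π]`), with the exception of at
most a single pair of consecutive edges incident to the root. -/
def NearConvex {V : Type*} (T : RTree V) (D : V → Pt) : Prop :=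
  MonotoneTreeDrawing T D ∧
  ∃ b1 b2 : ℝ, ∀ u θ1 θ2, ConsecutiveAt T D u θ1 θ2 →
    ccwGap θ1 θ2 ≤ Real.pi ∨ (u = T.root ∧ θ1 = b1 ∧ θ2 = b2)

/-- A planar straight-line drawing of the tree: two distinct edge segments meet only
at the image of a shared endpoint. -/
def PlanarTreeDrawing {V : Type*} (T : RTree V) (D : V → Pt) : Prop :=
  ∀ b d : V, b ≠ T.root → d ≠ T.root → b ≠ d →
    ∀ p : Pt, p ∈ segment ℝ (D (T.parent b)) (D b) → p ∈ segment ℝ (D (T.parent d)) (D d) →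
      ∃ w : V, (w = T.parent b ∨ w = b) ∧ (w = T.parent d ∨ w = d) ∧ p = D w

/-- The `lam`-elongation of the tree edge `(parent u, u)`: the drawing of the subtree
`T_u` is translated along the direction of the edge so that the length of the edge
increases by `lam` times the length of the reference vector of `u`. -/
noncomputable def elongate {V : Type*} (T : RTree V) (D : V → Pt) (u : V) (lam : ℕ) :
    V → Pt := fun v =>
  haveI := Classical.dec (T.Anc u v)
  if T.Anc u v then D v + (lam : ℝ) • (D u - D (T.parent u)) else D v
/-- A plane graph: a simple graph together with a (straight-line) planar embedding,
given by positions for the vertices; edges are drawn as straight-line segments.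
(By Fáry's theorem this entails no loss of generality for plane graphs.) -/
structure PlaneGraph (V : Type*) where
  G : SimpleGraph V
  pos : V → Pt
  pos_inj : Function.Injective pos

namespace PlaneGraph

variable {V : Type*}

/-- The straight-line segment drawn for the unordered pair `e` under the placement `D`. -/
def segOf (D : V → Pt) (e : Sym2 V) : Set Pt :=
  {p | ∃ a b : V, e = s(a, b) ∧ p ∈ segment ℝ (D a) (D b)}

/-- The family of edges `E` is drawn planarly by the placement `D`: two distinct edge
segments meet only at the image of a common endpoint, and no vertex lies on an edge
segment other than at its endpoints. -/
def PlanarOn (D : V → Pt) (E : Set (Sym2 V)) : Prop :=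
  (∀ e1 ∈ E, ∀ e2 ∈ E, e1 ≠ e2 →
    ∀ p : Pt, p ∈ segOf D e1 → p ∈ segOf D e2 → ∃ w : V, w ∈ e1 ∧ w ∈ e2 ∧ p = D w) ∧
  (∀ e ∈ E, ∀ w : V, D w ∈ segOf D e → w ∈ e)

/-- The embedding of a plane graph is planar. -/
def IsPlane (P : PlaneGraph V) : Prop := PlanarOn P.pos P.G.edgeSet

/-- The union of all drawn edges of the plane graph. -/
def edgeUnion (P : PlaneGraph V) : Set Pt := ⋃ e ∈ P.G.edgeSet, segOf P.pos e

/-- The outer face: the union of the unbounded connected components of the complement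
of the drawing. -/
def outerRegion (P : PlaneGraph V) : Set Pt :=
  {p | p ∉ P.edgeUnion ∧ ¬ Bornology.IsBounded (connectedComponentIn P.edgeUnionᶜ p)}

/-- A vertex lying on the boundary of the outer face. -/
def IsOuterVertex (P : PlaneGraph V) (v : V) : Prop := P.pos v ∈ closure P.outerRegion

/-- An inner vertex: one not lying on the boundary of the outer face. -/
def IsInnerVertex (P : PlaneGraph V) (v : V) : Prop := ¬ P.IsOuterVertex v

/-- A plane graph is `k`-inner if it has at most `k` inner vertices. -/
def KInner (P : PlaneGraph V) (k : ℕ) : Prop := {v | P.IsInnerVertex v}.ncard ≤ k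

end PlaneGraph

/-- A monotone drawing of a graph: every pair of vertices is connected by a path whose
orthogonal projections on some line appear in path order. -/
def MonotoneGraphDrawing {V : Type*} (G : SimpleGraph V) (D : V → Pt) : Prop :=
  ∀ u v : V, ∃ (p : List V) (d : Pt), d ≠ 0 ∧
    p.head? = some u ∧ p.getLast? = some v ∧
    p.Chain' G.Adj ∧
    (p.map fun w => d.1 * (D w).1 + d.2 * (D w).2).Chain' (· < ·)

/-- A spanning tree of (the graph of) a plane graph `P`, rooted at some vertex. -/
structure SpanningTree {V : Type*} (P : PlaneGraph V) where
  tree : RTree V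
  adj_parent : ∀ v : V, v ≠ tree.root → P.G.Adj (tree.parent v) v

/-- A non-tree edge of `P` with respect to the tree `T`. -/
def IsNonTreeEdge {V : Type*} (P : PlaneGraph V) (T : RTree V) (e : Sym2 V) : Prop :=
  e ∈ P.G.edgeSet ∧ ¬ T.IsTreeEdge e

/-- Clockwise angle at `u` of the edge towards `w`, measured starting from the reference
direction at `u`: the direction from `u` towards its parent (or the reference direction
`rootRef` if `u` is the root). This realizes the clockwise order of the edges incident
to `u`, starting from the edge entering `u` from its parent. -/
noncomputable def cwAngle {V : Type*} (P : PlaneGraph V) (T : RTree V) (rootRef : ℝ)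
    (u w : V) : ℝ :=
  haveI := Classical.dec (u = T.root)
  ccwGap (slopeAngle (P.pos u) (P.pos w))
    (if u = T.root then rootRef else slopeAngle (P.pos u) (P.pos (T.parent u)))

/-- Condition (c) of C2, for `X_v`: the non-tree edge `(v,v')` leads into the subtree
rooted at a left-group child `x` of a strict ancestor `u` of `v` (with `c` the child of
`u` on the tree path from the root to `v`). -/
def XCond {V : Type*} (P : PlaneGraph V) (T : RTree V) (rootRef : ℝ) (v v' : V) : Prop :=
  ∃ u c x : V, T.Anc u v ∧ u ≠ v ∧
    T.parent c = u ∧ c ≠ u ∧ T.Anc c v ∧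
    T.parent x = u ∧ x ≠ u ∧ x ≠ c ∧
    cwAngle P T rootRef u x < cwAngle P T rootRef u c ∧ T.Anc x v'

/-- Condition (c) of C2, for `Z_v`: the non-tree edge `(v,v')` leads into the subtree
rooted at a right-group child `x` of a strict ancestor `u` of `v`. -/
def ZCond {V : Type*} (P : PlaneGraph V) (T : RTree V) (rootRef : ℝ) (v v' : V) : Prop :=
  ∃ u c x : V, T.Anc u v ∧ u ≠ v ∧
    T.parent c = u ∧ c ≠ u ∧ T.Anc c v ∧
    T.parent x = u ∧ x ≠ u ∧ x ≠ c ∧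
    cwAngle P T rootRef u c < cwAngle P T rootRef u x ∧ T.Anc x v'

/-- A good spanning tree (Hossain–Rahman) of a plane graph `P`: an ordered spanning
tree rooted at a vertex on the outer face boundary such that every vertex `v ≠ root`
satisfies conditions C1 and C2. -/
structure GoodSpanningTree {V : Type*} (P : PlaneGraph V) where
  spanning : SpanningTree P
  rootRef : ℝ
  root_outer : P.IsOuterVertex spanning.tree.root
  /-- C1: no non-tree edge joins `v` to a strict ancestor of `v`. -/
  C1 : ∀ v w : V, P.G.Adj v w → spanning.tree.Anc w v → w ≠ v →
    w = spanning.tree.parent v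
  /-- C2: at every vertex `v ≠ root` the incident edges other than the one from the
  parent split, in clockwise order after the parent edge, into the non-tree edges
  `X_v` (towards left-group subtrees), the tree edges `Y_v`, and the non-tree edges
  `Z_v` (towards right-group subtrees). -/
  C2 : ∃ isX isZ : V → V → Prop, ∀ v : V, v ≠ spanning.tree.root →
    (∀ w : V, P.G.Adj v w → w ≠ spanning.tree.parent v → spanning.tree.parent w ≠ v →
      (isX v w ∨ isZ v w) ∧ ¬ (isX v w ∧ isZ v w) ∧
      (isX v w → XCond P spanning.tree rootRef v w) ∧
      (isZ v w → ZCond P spanning.tree rootRef v w)) ∧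
    (∀ wx wy : V, isX v wx → spanning.tree.parent wy = v → wy ≠ v →
      cwAngle P spanning.tree rootRef v wx < cwAngle P spanning.tree rootRef v wy) ∧
    (∀ wy wz : V, spanning.tree.parent wy = v → wy ≠ v → isZ v wz →
      cwAngle P spanning.tree rootRef v wy < cwAngle P spanning.tree rootRef v wz) ∧
    (∀ wx wz : V, isX v wx → isZ v wz →
      cwAngle P spanning.tree rootRef v wx < cwAngle P spanning.tree rootRef v wz)

/-- `w` lies on the tree path between `u` and `v`, as the lower endpoint of a path
edge `(parent w, w)`: it is an ancestor of exactly one of `u`, `v`. -/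
def onTreePath {V : Type*} (T : RTree V) (u v w : V) : Prop :=
  w ≠ T.root ∧ ((T.Anc w u ∧ ¬ T.Anc w v) ∨ (T.Anc w v ∧ ¬ T.Anc w u))

/-- The drawn cycle formed by the (non-tree) edge `(u,v)` together with the tree edges
on the tree path between `u` and `v`. -/
def cycleSet {V : Type*} (D : V → Pt) (T : RTree V) (u v : V) : Set Pt :=
  segment ℝ (D u) (D v) ∪
    ⋃ w ∈ {w : V | onTreePath T u v w}, segment ℝ (D (T.parent w)) (D w)

/-- The point `p` lies strictly inside the cycle formed by the edge `(u,v)` and tree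
edges: it avoids the cycle and its connected component in the complement is bounded. -/
def CoversPt {V : Type*} (D : V → Pt) (T : RTree V) (u v : V) (p : Pt) : Prop :=
  p ∉ cycleSet D T u v ∧
    Bornology.IsBounded (connectedComponentIn (cycleSet D T u v)ᶜ p)

/-- The edge `(u,v)` covers the vertex `w`. -/
def Covers {V : Type*} (P : PlaneGraph V) (T : RTree V) (u v w : V) : Prop :=
  CoversPt P.pos T u v (P.pos w)

/-- `C(e)`: the set of leaves of `T` covered by the edge `e`. -/
def coveredLeaves {V : Type*} (P : PlaneGraph V) (T : RTree V) (e : Sym2 V) : Set V :=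
  {w | T.IsLeaf w ∧ ∃ u v : V, e = s(u, v) ∧ Covers P T u v w}

/-- The edge `e'` lies in (the closed region bounded by) the cycle induced by the
tree edges and the edge `e`. -/
def InsideCycle {V : Type*} (P : PlaneGraph V) (T : RTree V) (e e' : Sym2 V) : Prop :=
  ∃ u v : V, e = s(u, v) ∧
    ∀ p ∈ PlaneGraph.segOf P.pos e', p ∉ cycleSet P.pos T u v →
      Bornology.IsBounded (connectedComponentIn (cycleSet P.pos T u v)ᶜ p)

/-- A leader edge: a non-tree edge `e` with `C(e) ≠ ∅` such that no other non-tree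
edge `e'` with `C(e') = C(e)` lies inside the cycle induced by the tree edges and `e`. -/
def IsLeaderEdge {V : Type*} (P : PlaneGraph V) (T : RTree V) (e : Sym2 V) : Prop :=
  IsNonTreeEdge P T e ∧ (coveredLeaves P T e).Nonempty ∧
    ¬ ∃ e' : Sym2 V, IsNonTreeEdge P T e' ∧ e' ≠ e ∧
      coveredLeaves P T e' = coveredLeaves P T e ∧ InsideCycle P T e e'

/-- The dependency relation between leader edges: `e1` must be inserted before `e2`. -/
def LeaderDep {V : Type*} (P : PlaneGraph V) (T : RTree V) (e1 e2 : Sym2 V) : Prop :=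
  coveredLeaves P T e1 ⊂ coveredLeaves P T e2 ∨
    ∃ a b : V, a ∈ e1 ∧ b ∈ e2 ∧ a ≠ b ∧ T.Anc a b

private lemma isClosed_seg (x y : Pt) : IsClosed (segment ℝ x y) := by
  rw [segment_eq_image]
  exact (isCompact_Icc.image (by continuity)).isClosed

private lemma isClosed_cycleSet {V : Type*} [Fintype V] (D : V → Pt) (T : RTree V)
    (u v : V) : IsClosed (cycleSet D T u v) := by
  refine IsClosed.union (isClosed_seg _ _) ?_
  exact (Set.toFinite _).isClosed_biUnion fun w _ => isClosed_seg _ _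

private lemma cycle_subset_edgeUnion {V : Type*} (P : PlaneGraph V) (T : SpanningTree P)
    (u v : V) (huv : P.G.Adj u v) :
    cycleSet P.pos T.tree u v ⊆ P.edgeUnion := by
  intro p hp
  rcases hp with hp | hp
  · exact Set.mem_biUnion ((SimpleGraph.mem_edgeSet _).2 huv) ⟨u, v, rfl, hp⟩
  · simp only [Set.mem_iUnion, Set.mem_setOf_eq] at hp
    obtain ⟨w, hw, hp⟩ := hp
    exact Set.mem_biUnion ((SimpleGraph.mem_edgeSet _).2 (T.adj_parent w hw.1)) ⟨_, _, rfl, hp⟩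

/-- In a `k`-inner plane graph with a good spanning tree `T`, a
vertex on the outer face boundary that is a leaf of `T` is not covered by any edge of
`G`; consequently, for every non-tree edge `e`, `C(e)` consists of inner vertices
only, and `|C(e)| ≤ k`. -/
theorem covered_leaves_are_inner {V : Type*} [Fintype V] (P : PlaneGraph V)
    (hP : P.IsPlane) (k : ℕ) (hk : P.KInner k) (T : GoodSpanningTree P) :
    (∀ w : V, P.IsOuterVertex w → T.spanning.tree.IsLeaf w →
      ∀ u v : V, P.G.Adj u v → ¬ Covers P T.spanning.tree u v w) ∧
    (∀ e : Sym2 V, IsNonTreeEdge P T.spanning.tree e →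
      (∀ w ∈ coveredLeaves P T.spanning.tree e, P.IsInnerVertex w) ∧
      (coveredLeaves P T.spanning.tree e).ncard ≤ k) := by
  have part1 : ∀ w : V, P.IsOuterVertex w →
      ∀ u v : V, P.G.Adj u v → ¬ Covers P T.spanning.tree u v w := by
    intro w hw u v huv hcov
    obtain ⟨hnotin, hbd⟩ := hcov
    have hclosed := isClosed_cycleSet P.pos T.spanning.tree u v
    obtain ⟨ε, hε, hball⟩ := Metric.isOpen_iff.1 hclosed.isOpen_compl _ hnotin
    obtain ⟨q, hq, hdist⟩ := Metric.mem_closure_iff.1 hw ε hε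
    have hqball : q ∈ Metric.ball (P.pos w) ε := by
      rw [Metric.mem_ball]; rwa [dist_comm]
    have hsub := (convex_ball (P.pos w) ε).isPreconnected.subset_connectedComponentIn
      (Metric.mem_ball_self hε) hball
    have heq := connectedComponentIn_eq (hsub hqball)
    have hmono := connectedComponentIn_mono q
      (Set.compl_subset_compl.2 (cycle_subset_edgeUnion P T.spanning u v huv))
    exact hq.2 ((heq ▸ hbd).subset hmono)
  constructor
  · intro w hw _ u v huv
    exact part1 w hw u v huv
  · intro e he
    have hinner : ∀ w ∈ coveredLeaves P T.spanning.tree e, P.IsInnerVertex w := by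
      rintro w ⟨_, u, v, rfl, hcov⟩ hout
      exact part1 w hout u v ((SimpleGraph.mem_edgeSet _).1 he.1) hcov
    refine ⟨hinner, le_trans (Set.ncard_le_ncard (fun w hw => hinner w hw)
      (Set.toFinite _)) hk⟩
end

section
/- Every non-strictly slope-disjoint straight-line drawing of a rooted tree is a monotone drawing. -/
open scoped Real

lemma proj_step (P Q : Pt) (hPQ : P ≠ Q) (φ : ℝ) :
    ∃ C : ℝ, 0 < C ∧
      ((-Real.sin φ) * Q.1 + Real.cos φ * Q.2) - ((-Real.sin φ) * P.1 + Real.cos φ * P.2)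
        = C * Real.sin (slopeAngle P Q - φ) := by
  set z : ℂ := ⟨Q.1 - P.1, Q.2 - P.2⟩ with hzdef
  have hz : z ≠ 0 := by
    intro h0
    apply hPQ
    have h1 : Q.1 - P.1 = 0 := congrArg Complex.re h0
    have h2 : Q.2 - P.2 = 0 := congrArg Complex.im h0
    exact Prod.ext (by linarith) (by linarith)
  have habs : (0:ℝ) < ‖z‖ := norm_pos_iff.mpr hz
  have hcos : Real.cos z.arg = (Q.1 - P.1) / ‖z‖ := Complex.cos_arg hz
  have hsin : Real.sin z.arg = (Q.2 - P.2) / ‖z‖ := Complex.sin_arg z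
  have hslope : Real.sin (slopeAngle P Q - φ) = Real.sin (z.arg - φ) := by
    rw [slopeAngle, ← hzdef]
    split
    · rw [show z.arg + 2 * Real.pi - φ = (z.arg - φ) + 2 * Real.pi by ring,
        Real.sin_add_two_pi]
    · rfl
  refine ⟨‖z‖, habs, ?_⟩
  rw [hslope, Real.sin_sub, hcos, hsin]
  field_simp
  ring

lemma sin_neg_of_neg_of_neg_pi_lt {x : ℝ} (h1 : x < 0) (h2 : -Real.pi < x) :
    Real.sin x < 0 := by
  have := Real.sin_pos_of_pos_of_lt_pi (x := -x) (by linarith) (by linarith)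
  rw [Real.sin_neg] at this
  linarith

/-- Every non-strictly slope-disjoint straight-line drawing of a
rooted tree is a monotone drawing. -/
theorem nonStrictlySlopeDisjoint_monotone {V : Type*} (T : RTree V) (D : V → Pt)
    (hinj : Function.Injective D) (h : NonStrictlySlopeDisjoint T D) :
    MonotoneTreeDrawing T D := by
  classical
  obtain ⟨a1, a2, h1, h2, _h3, h4⟩ := h
  intro u v
  have hrootfix : ∀ n, T.parent^[n] T.root = T.root :=
    Function.iterate_fixed T.parent_root
  have hroot_anc : ∀ w, T.Anc T.root w := fun w => T.reaches_root w
  have hex : ∃ n, T.Anc (T.parent^[n] u) v := by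
    obtain ⟨n, hn⟩ := T.reaches_root u
    exact ⟨n, by rw [hn]; exact hroot_anc v⟩
  set k := Nat.find hex with hkdef
  have hkspec : T.Anc (T.parent^[k] u) v := Nat.find_spec hex
  have hkmin : ∀ i < k, ¬ T.Anc (T.parent^[i] u) v := fun i hi => Nat.find_min hex hi
  set t := T.parent^[k] u with htdef
  have hex2 : ∃ j, T.parent^[j] v = t := hkspec
  set m := Nat.find hex2 with hmdef
  have hmspec : T.parent^[m] v = t := Nat.find_spec hex2
  have hmmin : ∀ j < m, T.parent^[j] v ≠ t := fun j hj => Nat.find_min hex2 hj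
  -- basic tree facts about the two legs
  have hstepu : ∀ i < k, T.parent (T.parent^[i] u) ≠ T.parent^[i] u := by
    intro i hi hfix
    apply hkmin i hi
    have : t = T.parent^[i] u := by
      rw [htdef, show k = (k - i) + i by omega, Function.iterate_add_apply]
      exact Function.iterate_fixed hfix (k - i)
    rw [← this]; exact hkspec
  have hstepv : ∀ j < m, T.parent (T.parent^[j] v) ≠ T.parent^[j] v := by
    intro j hj hfix
    apply hmmin j hj
    rw [← hmspec, show m = (m - j) + j by omega, Function.iterate_add_apply]
    exact (Function.iterate_fixed hfix (m - j)).symm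
  have hneu : ∀ i < k, T.parent^[i] u ≠ T.root := by
    intro i hi hr
    exact hkmin i hi (by rw [hr]; exact hroot_anc v)
  have hnev : ∀ j < m, T.parent^[j] v ≠ T.root := by
    intro j hj hr
    apply hmmin j hj
    rw [hr, ← hmspec, show m = (m - j) + j by omega, Function.iterate_add_apply, hr,
      hrootfix]
  have hancu : ∀ i < k, T.Anc (T.parent^[k-1] u) (T.parent^[i] u) := by
    intro i hi
    exact ⟨k - 1 - i, by
      rw [← Function.iterate_add_apply, show k - 1 - i + i = k - 1 by omega]⟩
  have hancv : ∀ j < m, T.Anc (T.parent^[m-1] v) (T.parent^[j] v) := by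
    intro j hj
    exact ⟨m - 1 - j, by
      rw [← Function.iterate_add_apply, show m - 1 - j + j = m - 1 by omega]⟩
  -- slope bounds on the two legs
  have hsu : ∀ i < k,
      a1 (T.parent^[k-1] u) < slopeAngle (D (T.parent (T.parent^[i] u))) (D (T.parent^[i] u)) ∧
      slopeAngle (D (T.parent (T.parent^[i] u))) (D (T.parent^[i] u)) < a2 (T.parent^[k-1] u) := by
    intro i hi
    have := h2 (T.parent^[k-1] u) (T.parent^[i] u) (hneu i hi) (hancu i hi)
    exact this
  have hsv : ∀ j < m,
      a1 (T.parent^[m-1] v) < slopeAngle (D (T.parent (T.parent^[j] v))) (D (T.parent^[j] v)) ∧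
      slopeAngle (D (T.parent (T.parent^[j] v))) (D (T.parent^[j] v)) < a2 (T.parent^[m-1] v) := by
    intro j hj
    exact h2 (T.parent^[m-1] v) (T.parent^[j] v) (hnev j hj) (hancv j hj)
  -- degenerate case u = v
  by_cases hdeg : k = 0 ∧ m = 0
  · have hvu : v = u := by
      have := hmspec
      rw [hdeg.2] at this
      simp only [Function.iterate_zero_apply] at this
      rw [this, htdef, hdeg.1]
      simp
    refine ⟨[u], (1, 0), ?_, rfl, ?_, List.isChain_singleton u, ?_⟩
    · intro hc
      have : (1:ℝ) = 0 := congrArg Prod.fst hc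
      norm_num at this
    · rw [hvu]; rfl
    · exact List.isChain_singleton _
  -- choose the projection direction
  obtain ⟨s, φ, hs, hAneg, hBpos⟩ :
      ∃ s φ : ℝ, (s = 1 ∨ s = -1) ∧
        (∀ i < k, s * Real.sin
          (slopeAngle (D (T.parent (T.parent^[i] u))) (D (T.parent^[i] u)) - φ) < 0) ∧
        (∀ j < m, 0 < s * Real.sin
          (slopeAngle (D (T.parent (T.parent^[j] v))) (D (T.parent^[j] v)) - φ)) := by
    have hpi := Real.pi_pos
    rcases Nat.eq_zero_or_pos k with hk0 | hkpos
    · -- only the downward leg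
      have hm0 : 0 < m := by
        rcases Nat.eq_zero_or_pos m with h0 | h0
        · exact absurd ⟨hk0, h0⟩ hdeg
        · exact h0
      refine ⟨1, a1 (T.parent^[m-1] v), Or.inl rfl, by omega, ?_⟩
      intro j hj
      obtain ⟨hb1, hb2⟩ := hsv j hj
      obtain ⟨hc1, hc2, hc3⟩ := h1 (T.parent^[m-1] v)
      rw [one_mul]
      exact Real.sin_pos_of_pos_of_lt_pi (by linarith) (by linarith)
    rcases Nat.eq_zero_or_pos m with hm0 | hmpos
    · -- only the upward leg
      refine ⟨1, a2 (T.parent^[k-1] u), Or.inl rfl, ?_, by omega⟩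
      intro i hi
      obtain ⟨hb1, hb2⟩ := hsu i hi
      obtain ⟨hc1, hc2, hc3⟩ := h1 (T.parent^[k-1] u)
      rw [one_mul]
      exact sin_neg_of_neg_of_neg_pi_lt (by linarith) (by linarith)
    -- two legs: use sibling disjointness at the two children of t
    have hc1t : T.parent (T.parent^[k-1] u) = t := by
      rw [htdef]
      calc T.parent (T.parent^[k-1] u) = T.parent^[(k-1)+1] u :=
            (Function.iterate_succ_apply' T.parent (k-1) u).symm
        _ = T.parent^[k] u := by rw [show k - 1 + 1 = k by omega]
    have hc2t : T.parent (T.parent^[m-1] v) = t := by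
      rw [← hmspec]
      calc T.parent (T.parent^[m-1] v) = T.parent^[(m-1)+1] v :=
            (Function.iterate_succ_apply' T.parent (m-1) v).symm
        _ = T.parent^[m] v := by rw [show m - 1 + 1 = m by omega]
    have hc1r : T.parent^[k-1] u ≠ T.root := hneu (k-1) (by omega)
    have hc2r : T.parent^[m-1] v ≠ T.root := hnev (m-1) (by omega)
    have hc12 : T.parent^[k-1] u ≠ T.parent^[m-1] v := by
      intro heq
      exact hkmin (k-1) (by omega) (heq ▸ ⟨m - 1, rfl⟩)
    obtain ⟨hcu1, hcu2, hcu3⟩ := h1 (T.parent^[k-1] u)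
    obtain ⟨hcv1, hcv2, hcv3⟩ := h1 (T.parent^[m-1] v)
    rcases h4 _ _ hc1r hc2r hc12 (hc1t.trans hc2t.symm) with hcase | hcase
    · -- a2 c1 ≤ a1 c2
      refine ⟨1, a1 (T.parent^[m-1] v), Or.inl rfl, ?_, ?_⟩
      · intro i hi
        obtain ⟨hb1, hb2⟩ := hsu i hi
        rw [one_mul]
        exact sin_neg_of_neg_of_neg_pi_lt (by linarith) (by linarith)
      · intro j hj
        obtain ⟨hb1, hb2⟩ := hsv j hj
        rw [one_mul]
        exact Real.sin_pos_of_pos_of_lt_pi (by linarith) (by linarith)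
    · -- a2 c2 ≤ a1 c1
      refine ⟨-1, a2 (T.parent^[m-1] v), Or.inr rfl, ?_, ?_⟩
      · intro i hi
        obtain ⟨hb1, hb2⟩ := hsu i hi
        have : 0 < Real.sin
            (slopeAngle (D (T.parent (T.parent^[i] u))) (D (T.parent^[i] u))
              - a2 (T.parent^[m-1] v)) :=
          Real.sin_pos_of_pos_of_lt_pi (by linarith) (by linarith)
        nlinarith
      · intro j hj
        obtain ⟨hb1, hb2⟩ := hsv j hj
        have : Real.sin
            (slopeAngle (D (T.parent (T.parent^[j] v))) (D (T.parent^[j] v))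
              - a2 (T.parent^[m-1] v)) < 0 :=
          sin_neg_of_neg_of_neg_pi_lt (by linarith) (by linarith)
        nlinarith
  -- the projection direction vector
  set d : Pt := (s * (-Real.sin φ), s * Real.cos φ) with hddef
  have hs0 : s ≠ 0 := by rcases hs with h | h <;> rw [h] <;> norm_num
  have hd0 : d ≠ 0 := by
    intro hc
    have h1' : s * (-Real.sin φ) = 0 := congrArg Prod.fst hc
    have h2' : s * Real.cos φ = 0 := congrArg Prod.snd hc
    have hsin0 : Real.sin φ = 0 := by
      rcases mul_eq_zero.1 h1' with h | h
      · exact absurd h hs0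
      · linarith
    have hcos0 : Real.cos φ = 0 := by
      rcases mul_eq_zero.1 h2' with h | h
      · exact absurd h hs0
      · exact h
    have := Real.sin_sq_add_cos_sq φ
    rw [hsin0, hcos0] at this
    norm_num at this
  -- projection of the drawing
  set proj : V → ℝ := fun w => d.1 * (D w).1 + d.2 * (D w).2 with hprojdef
  have hstep : ∀ w : V, T.parent w ≠ w →
      ∃ C : ℝ, 0 < C ∧ proj w - proj (T.parent w)
        = s * (C * Real.sin (slopeAngle (D (T.parent w)) (D w) - φ)) := by
    intro w hw
    have hne : D (T.parent w) ≠ D w := fun hDE => hw (hinj hDE)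
    obtain ⟨C, hC, hEq⟩ := proj_step (D (T.parent w)) (D w) hne φ
    refine ⟨C, hC, ?_⟩
    simp only [hprojdef, hddef]
    linear_combination s * hEq
  have hAlt : ∀ i < k, proj (T.parent^[i] u) < proj (T.parent^[i+1] u) := by
    intro i hi
    obtain ⟨C, hC, hEq⟩ := hstep (T.parent^[i] u) (hstepu i hi)
    have hneg := hAneg i hi
    have : proj (T.parent^[i] u) - proj (T.parent (T.parent^[i] u)) < 0 := by
      rw [hEq]
      nlinarith
    rw [Function.iterate_succ_apply']
    linarith
  have hBlt : ∀ j < m, proj (T.parent^[j+1] v) < proj (T.parent^[j] v) := by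
    intro j hj
    obtain ⟨C, hC, hEq⟩ := hstep (T.parent^[j] v) (hstepv j hj)
    have hpos := hBpos j hj
    have : 0 < proj (T.parent^[j] v) - proj (T.parent (T.parent^[j] v)) := by
      rw [hEq]
      nlinarith
    rw [Function.iterate_succ_apply']
    linarith
  -- assemble the path
  refine ⟨(List.range (k+1)).map (fun i => T.parent^[i] u)
      ++ ((List.range m).map (fun j => T.parent^[j] v)).reverse, d, hd0, ?_, ?_, ?_, ?_⟩
  · -- head
    rw [List.range_succ_eq_map]
    rfl
  · -- last
    rcases Nat.eq_zero_or_pos m with hm0 | hmpos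
    · have hvt : v = t := by rw [← hmspec, hm0]; rfl
      rw [hm0]
      simp only [List.range_zero, List.map_nil, List.reverse_nil, List.append_nil]
      simp only [List.range_succ, List.map_append, List.map_cons, List.map_nil,
        List.getLast?_concat]
      rw [hvt, htdef]
    · rw [List.getLast?_append, List.getLast?_reverse]
      have : (List.range m) = 0 :: (List.range (m-1)).map Nat.succ := by
        rw [← List.range_succ_eq_map, show m - 1 + 1 = m by omega]
      rw [this]
      rfl
  · -- Chain' TAdj
    rw [show List.Chain' = List.IsChain from rfl, List.isChain_append]
    refine ⟨?_, ?_, ?_⟩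
    · rw [List.isChain_map, List.isChain_range_succ]
      intro i hi
      show T.TAdj (T.parent^[i] u) (T.parent^[i+1] u)
      have hps : T.parent^[i+1] u = T.parent (T.parent^[i] u) :=
        Function.iterate_succ_apply' T.parent i u
      exact ⟨fun hEq => hstepu i hi (by rw [hps] at hEq; exact hEq.symm),
        Or.inl hps.symm⟩
    · rw [List.isChain_reverse, List.isChain_map]
      rcases Nat.eq_zero_or_pos m with hm0 | hmpos
      · rw [hm0]; exact List.isChain_nil
      · rw [show m = Nat.succ (m-1) by omega, List.isChain_range_succ]
        intro j hj
        have hj' : j < m := by omega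
        show T.TAdj (T.parent^[j+1] v) (T.parent^[j] v)
        have hps : T.parent^[j+1] v = T.parent (T.parent^[j] v) :=
          Function.iterate_succ_apply' T.parent j v
        exact ⟨fun hEq => hstepv j hj' (by rw [hps] at hEq; exact hEq),
          Or.inr hps.symm⟩
    · intro x hx y hy
      rcases Nat.eq_zero_or_pos m with hm0 | hmpos
      · rw [hm0] at hy; simp at hy
      · have hxval : x = t := by
          simp only [List.range_succ, List.map_append, List.map_cons, List.map_nil,
            List.getLast?_concat, Option.mem_def, Option.some.injEq] at hx
          rw [← hx, htdef]
        have hyval : y = T.parent^[m-1] v := by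
          rw [List.head?_reverse] at hy
          have : (List.range m) = (List.range (m-1)) ++ [m-1] := by
            have h' : List.range (m - 1 + 1) = List.range (m-1) ++ [m-1] :=
              List.range_succ (n := m-1)
            rw [show m - 1 + 1 = m by omega] at h'
            exact h'
          rw [this] at hy
          simp only [List.map_append, List.map_cons, List.map_nil, List.getLast?_concat,
            Option.mem_def, Option.some.injEq] at hy
          rw [← hy]
        subst hxval hyval
        refine ⟨fun hEq => hmmin (m-1) (by omega) hEq.symm, Or.inr ?_⟩
        calc T.parent (T.parent^[m-1] v) = T.parent^[(m-1)+1] v :=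
              (Function.iterate_succ_apply' T.parent (m-1) v).symm
          _ = t := by rw [show m - 1 + 1 = m by omega, hmspec]
  · -- Chain' (<) on projections
    rw [List.map_append, List.map_map, List.map_reverse, List.map_map, show List.Chain' = List.IsChain from rfl, List.isChain_append]
    refine ⟨?_, ?_, ?_⟩
    · rw [List.isChain_map, List.isChain_range_succ]
      intro i hi
      exact hAlt i hi
    · rw [List.isChain_reverse, List.isChain_map]
      rcases Nat.eq_zero_or_pos m with hm0 | hmpos
      · rw [hm0]; exact List.isChain_nil
      · rw [show m = Nat.succ (m-1) by omega, List.isChain_range_succ]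
        intro j hj
        exact hBlt j (by omega)
    · intro x hx y hy
      rcases Nat.eq_zero_or_pos m with hm0 | hmpos
      · rw [hm0] at hy; simp at hy
      · have hxval : x = proj t := by
          simp only [List.range_succ, List.map_append, List.map_cons, List.map_nil,
            List.getLast?_concat, Option.mem_def, Option.some.injEq] at hx
          rw [← hx, htdef]
          rfl
        have hyval : y = proj (T.parent^[m-1] v) := by
          rw [List.head?_reverse] at hy
          have : (List.range m) = (List.range (m-1)) ++ [m-1] := by
            have h' : List.range (m - 1 + 1) = List.range (m-1) ++ [m-1] :=
              List.range_succ (n := m-1)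
            rw [show m - 1 + 1 = m by omega] at h'
            exact h'
          rw [this] at hy
          simp only [List.map_append, List.map_cons, List.map_nil, List.getLast?_concat,
            Option.mem_def, Option.some.injEq] at hy
          rw [← hy]
          rfl
        subst hxval hyval
        have := hBlt (m-1) (by omega)
        rw [show m - 1 + 1 = m by omega, hmspec] at this
        exact this
end

section
/- Let Γ be a straight-line drawing of a rooted tree T that is monotone, near-convex and non-strictly slope-disjoint, and let (p^u,u) be a tree edge with λ ∈ ℕ. Then the drawing obtained from Γ by the λ-elongation of edge (p^u,u) is again monotone, near-convex and non-strictly slope-disjoint (in particular, it remains planar). -/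
open scoped Real

noncomputable def sArg (z : ℂ) : ℝ := if z.arg < 0 then z.arg + 2 * Real.pi else z.arg

noncomputable def crossE (α : ℝ) (v : ℝ × ℝ) : ℝ := Real.cos α * v.2 - Real.sin α * v.1

lemma key1 (α β : ℝ) (h0 : 0 ≤ α) (hab : α < β) (hpi : β ≤ Real.pi) (z : ℂ) :
    (α < sArg z ∧ sArg z < β) ↔
    (0 < Real.cos α * z.im - Real.sin α * z.re ∧ Real.cos β * z.im - Real.sin β * z.re < 0) := by
  have hz1 := Complex.neg_pi_lt_arg z
  have hz2 := Complex.arg_le_pi z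
  have hpi0 := Real.pi_pos
  constructor
  · rintro ⟨h1, h2⟩
    have harg : sArg z = z.arg := by
      unfold sArg at *
      split_ifs at * with h
      · exfalso; linarith
      · rfl
    rw [harg] at h1 h2
    have hzne : z ≠ 0 := by
      intro h; rw [h, Complex.arg_zero] at h1; linarith
    have habs : 0 < ‖z‖ := by
      simpa using (norm_pos_iff.mpr hzne)
    have hre := Complex.norm_mul_cos_arg z
    have him := Complex.norm_mul_sin_arg z
    have e1 : Real.cos α * z.im - Real.sin α * z.re
        = ‖z‖ * Real.sin (z.arg - α) := by
      rw [Real.sin_sub, ← hre, ← him]; ring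
    have e2 : Real.cos β * z.im - Real.sin β * z.re
        = ‖z‖ * Real.sin (z.arg - β) := by
      rw [Real.sin_sub, ← hre, ← him]; ring
    constructor
    · rw [e1]
      exact mul_pos habs (Real.sin_pos_of_pos_of_lt_pi (by linarith) (by linarith))
    · rw [e2]
      exact mul_neg_of_pos_of_neg habs
        (Real.sin_neg_of_neg_of_neg_pi_lt (by linarith) (by linarith))
  · rintro ⟨h1, h2⟩
    have hzne : z ≠ 0 := by
      intro h; rw [h] at h1; simp at h1
    have habs : 0 < ‖z‖ := by
      simpa using (norm_pos_iff.mpr hzne)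
    have hre := Complex.norm_mul_cos_arg z
    have him := Complex.norm_mul_sin_arg z
    have e1 : Real.cos α * z.im - Real.sin α * z.re
        = ‖z‖ * Real.sin (z.arg - α) := by
      rw [Real.sin_sub, ← hre, ← him]; ring
    have e2 : Real.cos β * z.im - Real.sin β * z.re
        = ‖z‖ * Real.sin (z.arg - β) := by
      rw [Real.sin_sub, ← hre, ← him]; ring
    rw [e1] at h1; rw [e2] at h2
    have hs1 : 0 < Real.sin (z.arg - α) := by
      by_contra h
      exact absurd h1 (by push_neg at h ⊢; exact mul_nonpos_of_nonneg_of_nonpos habs.le h)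
    have hs2 : Real.sin (z.arg - β) < 0 := by
      by_contra h
      push_neg at h
      exact absurd h2 (not_lt.mpr (mul_nonneg habs.le h))
    have hα : α < z.arg := by
      by_contra h
      push_neg at h
      rcases le_or_gt (z.arg - α) (-Real.pi) with hc | hc
      · -- z.arg - β ∈ (-2π, -π), sin positive there
        have hb1 : -(2 * Real.pi) < z.arg - β := by linarith
        have hb2 : z.arg - β < -Real.pi := by linarith
        have : 0 < Real.sin (z.arg - β) := by
          have := Real.sin_pos_of_pos_of_lt_pi (x := z.arg - β + 2 * Real.pi)
            (by linarith) (by linarith)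
          rwa [Real.sin_add_two_pi] at this
        linarith
      · have : Real.sin (-(z.arg - α)) ≥ 0 :=
          Real.sin_nonneg_of_nonneg_of_le_pi (by linarith) (by linarith)
        rw [Real.sin_neg] at this
        linarith
    have hβ : z.arg < β := by
      by_contra h
      push_neg at h
      have : 0 ≤ Real.sin (z.arg - β) :=
        Real.sin_nonneg_of_nonneg_of_le_pi (by linarith) (by linarith)
      linarith
    have : sArg z = z.arg := by
      unfold sArg; rw [if_neg (not_lt.mpr (by linarith))]
    rw [this]
    exact ⟨hα, hβ⟩

lemma slopeAngle_eq_sArg (p q : Pt) : slopeAngle p q = sArg ⟨q.1 - p.1, q.2 - p.2⟩ := rfl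

lemma key1' (α β : ℝ) (h0 : 0 ≤ α) (hab : α < β) (hpi : β ≤ Real.pi) (p q : Pt) :
    (α < slopeAngle p q ∧ slopeAngle p q < β) ↔
    (0 < crossE α (q - p) ∧ crossE β (q - p) < 0) := by
  rw [slopeAngle_eq_sArg, key1 α β h0 hab hpi]
  simp [crossE]

lemma slopeAngle_congr (x y x' y' : Pt) (s : ℝ) (hs : 0 < s)
    (h1 : y'.1 - x'.1 = s * (y.1 - x.1)) (h2 : y'.2 - x'.2 = s * (y.2 - x.2)) :
    slopeAngle x' y' = slopeAngle x y := by
  have hz : (⟨y'.1 - x'.1, y'.2 - x'.2⟩ : ℂ) = (s : ℂ) * ⟨y.1 - x.1, y.2 - x.2⟩ := by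
    apply Complex.ext <;> simp [Complex.mul_re, Complex.mul_im, h1, h2]
  unfold slopeAngle
  rw [hz, Complex.arg_real_mul _ hs]

lemma slopeAngle_rev (x y : Pt) (h0 : 0 < slopeAngle x y) (hpi : slopeAngle x y < Real.pi) :
    slopeAngle y x = slopeAngle x y + Real.pi := by
  set z : ℂ := ⟨y.1 - x.1, y.2 - x.2⟩ with hzdef
  have hz1 := Complex.neg_pi_lt_arg z
  have harg : slopeAngle x y = z.arg := by
    rw [slopeAngle_eq_sArg] at *
    unfold sArg at *
    split_ifs at * with h
    · exfalso; linarith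
    · rfl
  have hzne : z ≠ 0 := by
    intro h
    rw [harg, h, Complex.arg_zero] at h0; exact lt_irrefl _ h0
  have him : 0 < z.im := by
    have := Complex.norm_mul_sin_arg z
    rw [← this]
    exact mul_pos (by simpa using norm_pos_iff.mpr hzne)
      (Real.sin_pos_of_pos_of_lt_pi (by rw [← harg]; exact h0) (by rw [← harg]; exact hpi))
  have hneg : (⟨x.1 - y.1, x.2 - y.2⟩ : ℂ) = -z := by
    apply Complex.ext <;> simp [hzdef]
  have hargneg : (-z).arg = z.arg - Real.pi := Complex.arg_neg_eq_arg_sub_pi_of_im_pos him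
  rw [slopeAngle_eq_sArg, hneg]
  unfold sArg
  rw [hargneg, if_pos (by rw [← harg]; linarith)]
  rw [← harg]; ring

lemma crossE_combo (α : ℝ) (x y z : Pt) (s t : ℝ) (hst : s + t = 1) :
    crossE α (s • x + t • y - z) = s * crossE α (x - z) + t * crossE α (y - z) := by
  have h : s = 1 - t := by linarith
  subst h
  simp only [crossE, Prod.fst_sub, Prod.snd_sub, Prod.fst_add, Prod.snd_add,
    Prod.smul_fst, Prod.smul_snd, smul_eq_mul]
  ring

lemma crossE_split (α : ℝ) (x y z : Pt) :
    crossE α (x - z) = crossE α (y - z) + crossE α (x - y) := by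
  simp only [crossE, Prod.fst_sub, Prod.snd_sub]; ring

lemma crossE_self (α : ℝ) (x : Pt) : crossE α (x - x) = 0 := by
  simp [crossE]

lemma convex_pos {s t A B : ℝ} (hs : 0 ≤ s) (ht : 0 ≤ t) (hst : s + t = 1)
    (hA : 0 < A) (hB : 0 < B) : 0 < s * A + t * B := by
  rcases hs.lt_or_eq with h | h
  · have := mul_pos h hA
    have := mul_nonneg ht hB.le
    linarith
  · have ht1 : t = 1 := by linarith
    rw [← h, ht1]; simpa using hB

lemma convex_neg {s t A B : ℝ} (hs : 0 ≤ s) (ht : 0 ≤ t) (hst : s + t = 1)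
    (hA : A < 0) (hB : B < 0) : s * A + t * B < 0 := by
  have := convex_pos hs ht hst (neg_pos.mpr hA) (neg_pos.mpr hB)
  linarith

lemma chain'_and {α : Type*} {R S : α → α → Prop} {l : List α}
    (h1 : l.Chain' R) (h2 : l.Chain' S) : l.Chain' (fun a b => R a b ∧ S a b) := by
  unfold List.Chain' at *
  induction l with
  | nil => simp
  | cons a l ih =>
    rw [List.isChain_cons] at h1 h2 ⊢
    exact ⟨fun b hb => ⟨h1.1 b hb, h2.1 b hb⟩, ih h1.2 h2.2⟩

section TreeLemmas
variable {V : Type*} (T : RTree V)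

lemma root_fix : ∀ n, T.parent^[n] T.root = T.root := by
  intro n
  induction n with
  | zero => rfl
  | succ n ih => rw [Function.iterate_succ_apply, T.parent_root, ih]

lemma anc_root {c : V} (h : T.Anc c T.root) : c = T.root := by
  obtain ⟨n, hn⟩ := h
  rw [root_fix] at hn
  exact hn.symm

lemma anc_refl (v : V) : T.Anc v v := ⟨0, rfl⟩

lemma anc_of_ne {u w : V} (h : T.Anc u w) (hne : w ≠ u) : T.Anc u (T.parent w) := by
  obtain ⟨n, hn⟩ := h
  cases n with
  | zero => exact absurd hn hne
  | succ n => exact ⟨n, by rwa [Function.iterate_succ_apply] at hn⟩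

lemma anc_step {u w : V} (h : T.Anc u (T.parent w)) : T.Anc u w := by
  obtain ⟨n, hn⟩ := h
  exact ⟨n + 1, by rwa [Function.iterate_succ_apply]⟩

lemma fix_root {b : V} {n : ℕ} (hn : 0 < n) (h : T.parent^[n] b = b) : b = T.root := by
  obtain ⟨m, hm⟩ := T.reaches_root b
  have hloop : ∀ j, T.parent^[j * n] b = b := by
    intro j
    induction j with
    | zero => simp
    | succ j ih =>
      have he : (j + 1) * n = n + j * n := by ring
      rw [he, Function.iterate_add_apply, ih, h]
  have h1 : m ≤ m * n := Nat.le_mul_of_pos_right m hn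
  calc b = T.parent^[m * n] b := (hloop m).symm
    _ = T.parent^[(m * n - m) + m] b := by rw [Nat.sub_add_cancel h1]
    _ = T.parent^[m * n - m] (T.parent^[m] b) := Function.iterate_add_apply _ _ _ _
    _ = T.root := by rw [hm, root_fix]

lemma no_cycle {c : V} (hc : c ≠ T.root) : ¬ T.Anc c (T.parent c) := by
  rintro ⟨k, hk⟩
  apply hc
  exact fix_root T (n := k + 1) k.succ_pos (by rwa [Function.iterate_succ_apply])

lemma parent_ne {w : V} (hw : w ≠ T.root) : T.parent w ≠ w := by
  intro h
  exact hw (fix_root T (n := 1) one_pos (by simpa using h))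

lemma child_toward {b d : V} (h : T.Anc b d) (hne : d ≠ b) :
    ∃ c : V, T.parent c = b ∧ T.Anc c d := by
  obtain ⟨j, hj⟩ := h
  cases j with
  | zero => exact absurd hj hne
  | succ j =>
    refine ⟨T.parent^[j] d, ?_, ⟨j, rfl⟩⟩
    rw [← Function.iterate_succ_apply' T.parent j d]
    exact hj

lemma lca {b d : V} (hbd : ¬ T.Anc b d) (hdb : ¬ T.Anc d b) :
    ∃ q c1 c2 : V, c1 ≠ c2 ∧ c1 ≠ T.root ∧ c2 ≠ T.root ∧
      T.parent c1 = q ∧ T.parent c2 = q ∧ T.Anc c1 b ∧ T.Anc c2 d := by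
  classical
  have hex : ∃ n, T.Anc (T.parent^[n] b) d := by
    obtain ⟨m, hm⟩ := T.reaches_root b
    refine ⟨m, ?_⟩
    rw [hm]
    exact T.reaches_root d
  obtain ⟨n0, hn0, hmin⟩ : ∃ n, T.Anc (T.parent^[n] b) d ∧
      ∀ m < n, ¬ T.Anc (T.parent^[m] b) d :=
    ⟨Nat.find hex, Nat.find_spec hex, fun m hm => Nat.find_min hex hm⟩
  have hpos : n0 ≠ 0 := by
    intro h
    rw [h] at hn0
    simpa using hbd (by simpa using hn0)
  have hc1q : T.parent (T.parent^[n0 - 1] b) = T.parent^[n0] b := by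
    rw [← Function.iterate_succ_apply' T.parent (n0 - 1) b]
    congr 1
    omega
  have hnc1 : ¬ T.Anc (T.parent^[n0 - 1] b) d :=
    hmin _ (Nat.sub_lt (Nat.pos_of_ne_zero hpos) one_pos)
  have hc1b : T.Anc (T.parent^[n0 - 1] b) b := ⟨n0 - 1, rfl⟩
  have hc1r : T.parent^[n0 - 1] b ≠ T.root := by
    intro h
    exact hnc1 (h ▸ T.reaches_root d)
  have hdq : d ≠ T.parent^[n0] b := by
    intro h
    exact hdb ⟨n0, h.symm⟩
  have hexj : ∃ j, T.parent^[j] d = T.parent^[n0] b := hn0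
  obtain ⟨j0, hj0, hjmin⟩ : ∃ j, T.parent^[j] d = T.parent^[n0] b ∧
      ∀ m < j, T.parent^[m] d ≠ T.parent^[n0] b :=
    ⟨Nat.find hexj, Nat.find_spec hexj, fun m hm => Nat.find_min hexj hm⟩
  have hj0pos : j0 ≠ 0 := by
    intro h
    rw [h] at hj0
    exact hdq (by simpa using hj0)
  have hc2q : T.parent (T.parent^[j0 - 1] d) = T.parent^[n0] b := by
    rw [← Function.iterate_succ_apply' T.parent (j0 - 1) d]
    have he : (j0 - 1).succ = j0 := by omega
    rw [he]
    exact hj0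
  have hc2d : T.Anc (T.parent^[j0 - 1] d) d := ⟨j0 - 1, rfl⟩
  have hc2r : T.parent^[j0 - 1] d ≠ T.root := by
    intro h
    have hq : T.parent^[n0] b = T.root := by rw [← hc2q, h, T.parent_root]
    exact hjmin (j0 - 1) (Nat.sub_lt (Nat.pos_of_ne_zero hj0pos) one_pos) (by rw [h, hq])
  have hc12 : T.parent^[n0 - 1] b ≠ T.parent^[j0 - 1] d := by
    intro h
    exact hnc1 (h ▸ hc2d)
  exact ⟨T.parent^[n0] b, _, _, hc12, hc1r, hc2r, hc1q, hc2q, hc1b, hc2d⟩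

end TreeLemmas

section Planarity
variable {V : Type*} {T : RTree V} {E : V → Pt} {a1 a2 : V → ℝ}

/-- All vertices of the subtree `T_c` lie in the open cone of `c` based at the
drawing of `c`'s parent. -/
lemma subtree_pt (hr : ∀ v : V, 0 ≤ a1 v ∧ a1 v < a2 v ∧ a2 v ≤ Real.pi)
    (hs : ∀ v w : V, w ≠ T.root → T.Anc v w →
      a1 v < slopeAngle (E (T.parent w)) (E w) ∧
      slopeAngle (E (T.parent w)) (E w) < a2 v)
    {c : V} (hc : c ≠ T.root) :
    ∀ n (w : V), T.parent^[n] w = c →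
      0 < crossE (a1 c) (E w - E (T.parent c)) ∧
      crossE (a2 c) (E w - E (T.parent c)) < 0 := by
  have base : 0 < crossE (a1 c) (E c - E (T.parent c)) ∧
      crossE (a2 c) (E c - E (T.parent c)) < 0 :=
    (key1' (a1 c) (a2 c) (hr c).1 (hr c).2.1 (hr c).2.2 (E (T.parent c)) (E c)).mp
      (hs c c hc (anc_refl T c))
  intro n
  induction n with
  | zero => intro w hw; rw [show w = c from hw]; exact base
  | succ n ih =>
    intro w hw
    by_cases hwc : w = c
    · rw [hwc]; exact base
    · have hwr : w ≠ T.root := by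
        intro h
        rw [h, root_fix] at hw
        exact hc hw.symm
      have hpw : T.parent^[n] (T.parent w) = c := by
        rwa [← Function.iterate_succ_apply]
      have h1 := ih (T.parent w) hpw
      have h2 := (key1' (a1 c) (a2 c) (hr c).1 (hr c).2.1 (hr c).2.2
        (E (T.parent w)) (E w)).mp (hs c w hwr ⟨n + 1, hw⟩)
      constructor
      · rw [crossE_split (a1 c) (E w) (E (T.parent w)) (E (T.parent c))]
        linarith [h1.1, h2.1]
      · rw [crossE_split (a2 c) (E w) (E (T.parent w)) (E (T.parent c))]
        linarith [h1.2, h2.2]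

/-- All points of edges of the subtree `T_c` lie in the open cone of `c`, except
possibly the apex itself. -/
lemma subtree_seg (hr : ∀ v : V, 0 ≤ a1 v ∧ a1 v < a2 v ∧ a2 v ≤ Real.pi)
    (hs : ∀ v w : V, w ≠ T.root → T.Anc v w →
      a1 v < slopeAngle (E (T.parent w)) (E w) ∧
      slopeAngle (E (T.parent w)) (E w) < a2 v)
    {c : V} (hc : c ≠ T.root) {w : V} (hw : w ≠ T.root) (hanc : T.Anc c w)
    {p : Pt} (hp : p ∈ segment ℝ (E (T.parent w)) (E w)) :
    (w = c ∧ p = E (T.parent c)) ∨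
    (0 < crossE (a1 c) (p - E (T.parent c)) ∧ crossE (a2 c) (p - E (T.parent c)) < 0) := by
  obtain ⟨s, t, hs0, ht0, hst, hpeq⟩ := hp
  obtain ⟨n, hn⟩ := hanc
  have hw2 := subtree_pt hr hs hc n w hn
  by_cases hwc : w = c
  · subst hwc
    rcases ht0.eq_or_lt with ht | ht
    · left
      refine ⟨rfl, ?_⟩
      have hs1 : s = 1 := by linarith
      rw [← hpeq, ← ht, hs1]
      simp
    · right
      rw [← hpeq]
      constructor
      · rw [crossE_combo (a1 w) (E (T.parent w)) (E w) (E (T.parent w)) s t hst,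
          crossE_self]
        have := mul_pos ht hw2.1
        linarith
      · rw [crossE_combo (a2 w) (E (T.parent w)) (E w) (E (T.parent w)) s t hst,
          crossE_self]
        have := mul_neg_of_pos_of_neg ht hw2.2
        linarith
  · have hwanc : T.Anc c (T.parent w) := anc_of_ne T ⟨n, hn⟩ hwc
    obtain ⟨m, hm⟩ := hwanc
    have hw1 := subtree_pt hr hs hc m (T.parent w) hm
    right
    rw [← hpeq]
    constructor
    · rw [crossE_combo (a1 c) (E (T.parent w)) (E w) (E (T.parent c)) s t hst]
      exact convex_pos hs0 ht0 hst hw1.1 hw2.1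
    · rw [crossE_combo (a2 c) (E (T.parent w)) (E w) (E (T.parent c)) s t hst]
      exact convex_neg hs0 ht0 hst hw1.2 hw2.2

/-- The ancestor case of planarity: if `b` is a strict ancestor of `d` and the two
edge segments meet at `p`, then `p` is the drawing of `b` and `b = parent d`. -/
lemma planar_anc (hr : ∀ v : V, 0 ≤ a1 v ∧ a1 v < a2 v ∧ a2 v ≤ Real.pi)
    (hs : ∀ v w : V, w ≠ T.root → T.Anc v w →
      a1 v < slopeAngle (E (T.parent w)) (E w) ∧
      slopeAngle (E (T.parent w)) (E w) < a2 v)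
    {b d : V} (hb : b ≠ T.root) (hd : d ≠ T.root) (hne : b ≠ d) (h1 : T.Anc b d)
    {p : Pt} (hpb : p ∈ segment ℝ (E (T.parent b)) (E b))
    (hpd : p ∈ segment ℝ (E (T.parent d)) (E d)) :
    T.parent d = b ∧ p = E b := by
  obtain ⟨c, hcb, hcd⟩ := child_toward T h1 (Ne.symm hne)
  have hcr : c ≠ T.root := by
    intro h
    exact hb (by rw [← hcb, h, T.parent_root])
  have hseg := subtree_seg hr hs hcr hd hcd hpd
  rw [hcb] at hseg
  rcases hseg with ⟨hdc, hpe⟩ | ⟨hA, hB⟩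
  · exact ⟨by rw [hdc, hcb], hpe⟩
  · exfalso
    obtain ⟨s, t, hs0, ht0, hst, hpeq⟩ := hpb
    rcases hs0.eq_or_lt with hz | hz
    · -- s = 0 : p = E b, contradiction with hA
      have hpb' : p = E b := by
        rw [← hpeq, ← hz]
        have : t = 1 := by linarith
        rw [this]; simp
      rw [hpb', crossE_self] at hA
      exact lt_irrefl _ hA
    · -- p - E b = s • (E (parent b) - E b) so slope (E b) p points downward
      have hθ := (key1' (a1 c) (a2 c) (hr c).1 (hr c).2.1 (hr c).2.2 (E b) p).mpr ⟨hA, hB⟩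
      have hψ := hs b b hb (anc_refl T b)
      have hψ0 : 0 < slopeAngle (E (T.parent b)) (E b) := lt_of_le_of_lt (hr b).1 hψ.1
      have hψπ : slopeAngle (E (T.parent b)) (E b) < Real.pi :=
        lt_of_lt_of_le hψ.2 (hr b).2.2
      have hrev := slopeAngle_rev (E (T.parent b)) (E b) hψ0 hψπ
      have hscale : slopeAngle (E b) p = slopeAngle (E b) (E (T.parent b)) := by
        apply slopeAngle_congr (E b) (E (T.parent b)) (E b) p s hz
        · have := congrArg Prod.fst hpeq
          simp only [Prod.fst_add, Prod.smul_fst, smul_eq_mul] at this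
          have hts : t = 1 - s := by linarith
          rw [hts] at this
          linarith [this]
        · have := congrArg Prod.snd hpeq
          simp only [Prod.snd_add, Prod.smul_snd, smul_eq_mul] at this
          have hts : t = 1 - s := by linarith
          rw [hts] at this
          linarith [this]
      have h2c : slopeAngle (E b) p < a2 c := hθ.2
      rw [hscale, hrev] at h2c
      have := (hr c).2.2
      linarith [Real.pi_pos]

/-- Non-strictly slope-disjoint drawings of rooted trees are planar. -/
lemma planar_of_nssd (T : RTree V) (E : V → Pt)
    (h : NonStrictlySlopeDisjoint T E) : PlanarTreeDrawing T E := by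
  obtain ⟨a1, a2, hr, hs, hnest, hdisj⟩ := h
  intro b d hb hd hbd p hpb hpd
  by_cases h1 : T.Anc b d
  · obtain ⟨hpar, hpe⟩ := planar_anc hr hs hb hd hbd h1 hpb hpd
    exact ⟨b, Or.inr rfl, Or.inl hpar.symm, hpe⟩
  · by_cases h2 : T.Anc d b
    · obtain ⟨hpar, hpe⟩ := planar_anc hr hs hd hb (Ne.symm hbd) h2 hpd hpb
      exact ⟨d, Or.inl hpar.symm, Or.inr rfl, hpe⟩
    · obtain ⟨q, c1, c2, h12, h1r, h2r, hc1q, hc2q, hc1b, hc2d⟩ := lca T h1 h2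
      have s1 := subtree_seg hr hs h1r hb hc1b hpb
      have s2 := subtree_seg hr hs h2r hd hc2d hpd
      rw [hc1q] at s1
      rw [hc2q] at s2
      rcases s1 with ⟨hb1, hp1⟩ | ⟨hA1, hB1⟩
      · rcases s2 with ⟨hd2, hp2⟩ | ⟨hA2, hB2⟩
        · refine ⟨T.parent b, Or.inl rfl, Or.inl ?_, ?_⟩
          · rw [hb1, hc1q, hd2, hc2q]
          · rw [hp1, hb1, hc1q]
        · exfalso
          rw [hp1, crossE_self] at hA2
          exact lt_irrefl _ hA2
      · rcases s2 with ⟨hd2, hp2⟩ | ⟨hA2, hB2⟩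
        · exfalso
          rw [hp2, crossE_self] at hA1
          exact lt_irrefl _ hA1
        · exfalso
          have k1 := (key1' (a1 c1) (a2 c1) (hr c1).1 (hr c1).2.1 (hr c1).2.2
            (E q) p).mpr ⟨hA1, hB1⟩
          have k2 := (key1' (a1 c2) (a2 c2) (hr c2).1 (hr c2).2.1 (hr c2).2.2
            (E q) p).mpr ⟨hA2, hB2⟩
          rcases hdisj c1 c2 h1r h2r h12 (hc1q.trans hc2q.symm) with h | h
          · linarith [k1.2, k2.1]
          · linarith [k2.2, k1.1]

end Planarity
/-- The `λ`-elongation of a tree edge `(parent u, u)` preserves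
monotonicity, near-convexity and non-strict slope-disjointness of a tree drawing
(and in particular the elongated drawing is planar). -/

theorem elongation_preserves_properties {V : Type*} (T : RTree V) (D : V → Pt)
    (hinj : Function.Injective D) (u : V) (hu : u ≠ T.root) (lam : ℕ)
    (hmono : MonotoneTreeDrawing T D) (hnc : NearConvex T D)
    (hsd : NonStrictlySlopeDisjoint T D) :
    MonotoneTreeDrawing T (elongate T D u lam) ∧
    NearConvex T (elongate T D u lam) ∧
    NonStrictlySlopeDisjoint T (elongate T D u lam) ∧
    PlanarTreeDrawing T (elongate T D u lam) := by
  classical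
  set E : V → Pt := elongate T D u lam with hEdef
  -- description of E
  have hE1 : ∀ v, T.Anc u v → E v = D v + (lam : ℝ) • (D u - D (T.parent u)) := by
    intro v h
    simp only [hEdef, elongate, if_pos h]
  have hE2 : ∀ v, ¬ T.Anc u v → E v = D v := by
    intro v h
    simp only [hEdef, elongate, if_neg h]
  -- the vector of every tree edge is positively rescaled
  have hvec0 : ∀ b : V, ∃ κ : ℝ, 0 < κ ∧
      (E b).1 - (E (T.parent b)).1 = κ * ((D b).1 - (D (T.parent b)).1) ∧
      (E b).2 - (E (T.parent b)).2 = κ * ((D b).2 - (D (T.parent b)).2) := by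
    intro b
    by_cases hb : T.Anc u b
    · by_cases hpb : T.Anc u (T.parent b)
      · refine ⟨1, one_pos, ?_, ?_⟩ <;>
        · rw [hE1 b hb, hE1 (T.parent b) hpb]
          simp only [Prod.fst_add, Prod.snd_add, Prod.smul_fst, Prod.smul_snd,
            Prod.fst_sub, Prod.snd_sub, smul_eq_mul]
          ring
      · have hbu : b = u := by
          by_contra h
          exact hpb (anc_of_ne T hb h)
        subst hbu
        refine ⟨1 + (lam : ℝ), by positivity, ?_, ?_⟩ <;>
        · rw [hE1 b (anc_refl T b), hE2 (T.parent b) hpb]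
          simp only [Prod.fst_add, Prod.snd_add, Prod.smul_fst, Prod.smul_snd,
            Prod.fst_sub, Prod.snd_sub, smul_eq_mul]
          ring
    · have hpb : ¬ T.Anc u (T.parent b) := fun h => hb (anc_step T h)
      refine ⟨1, one_pos, ?_, ?_⟩ <;>
      · rw [hE2 b hb, hE2 (T.parent b) hpb]
        ring
  -- slope preservation along tree edges
  have hslope_par : ∀ w : V,
      slopeAngle (E (T.parent w)) (E w) = slopeAngle (D (T.parent w)) (D w) := by
    intro w
    obtain ⟨κ, hκ, h1, h2⟩ := hvec0 w
    exact slopeAngle_congr (D (T.parent w)) (D w) (E (T.parent w)) (E w) κ hκ h1 h2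
  have hslope_adj : ∀ a b : V, T.TAdj a b →
      slopeAngle (E a) (E b) = slopeAngle (D a) (D b) := by
    rintro a b ⟨hne, h | h⟩
    · -- b = parent a
      subst h
      obtain ⟨κ, hκ, h1, h2⟩ := hvec0 a
      exact slopeAngle_congr (D a) (D (T.parent a)) (E a) (E (T.parent a)) κ hκ
        (by linarith) (by linarith)
    · -- a = parent b
      subst h
      obtain ⟨κ, hκ, h1, h2⟩ := hvec0 b
      exact slopeAngle_congr (D (T.parent b)) (D b) (E (T.parent b)) (E b) κ hκ h1 h2
  -- monotonicity
  have hmono' : MonotoneTreeDrawing T E := by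
    intro v1 v2
    obtain ⟨pth, dir, hd0, hh, hl, hchain, hmc⟩ := hmono v1 v2
    refine ⟨pth, dir, hd0, hh, hl, hchain, ?_⟩
    unfold List.Chain' at hmc ⊢
    rw [List.isChain_map] at hmc ⊢
    refine (show List.IsChain _ _ from chain'_and hchain hmc).imp ?_
    rintro a b ⟨hadj, hfab⟩
    obtain ⟨κ, hκ, h1, h2⟩ : ∃ κ : ℝ, 0 < κ ∧
        (E b).1 - (E a).1 = κ * ((D b).1 - (D a).1) ∧
        (E b).2 - (E a).2 = κ * ((D b).2 - (D a).2) := by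
      rcases hadj with ⟨hne, h | h⟩
      · subst h
        obtain ⟨κ, hκ, h1, h2⟩ := hvec0 a
        exact ⟨κ, hκ, by linarith, by linarith⟩
      · subst h
        exact hvec0 b
    have hkey : dir.1 * (E b).1 + dir.2 * (E b).2 - (dir.1 * (E a).1 + dir.2 * (E a).2)
        = κ * ((dir.1 * (D b).1 + dir.2 * (D b).2) - (dir.1 * (D a).1 + dir.2 * (D a).2)) := by
      linear_combination dir.1 * h1 + dir.2 * h2
    have := mul_pos hκ (sub_pos.mpr hfab)
    linarith
  -- edge directions are unchanged
  have hdirs : ∀ v, edgeDirs T E v = edgeDirs T D v := by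
    intro v
    ext θ
    simp only [edgeDirs, Set.mem_setOf_eq]
    constructor
    · rintro ⟨w, hw, rfl⟩
      exact ⟨w, hw, (hslope_adj v w hw)⟩
    · rintro ⟨w, hw, rfl⟩
      exact ⟨w, hw, (hslope_adj v w hw).symm⟩
  have hcons : ∀ v θ1 θ2, ConsecutiveAt T E v θ1 θ2 ↔ ConsecutiveAt T D v θ1 θ2 := by
    intro v θ1 θ2
    unfold ConsecutiveAt
    rw [hdirs v]
  -- near-convexity
  have hnc' : NearConvex T E := by
    obtain ⟨_, b1, b2, hb⟩ := hnc
    exact ⟨hmono', b1, b2, fun v θ1 θ2 hc => hb v θ1 θ2 ((hcons v θ1 θ2).mp hc)⟩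
  -- slope-disjointness
  have hsd' : NonStrictlySlopeDisjoint T E := by
    obtain ⟨a1, a2, g1, g2, g3, g4⟩ := hsd
    refine ⟨a1, a2, g1, ?_, g3, g4⟩
    intro v w hw ha
    rw [hslope_par w]
    exact g2 v w hw ha
  exact ⟨hmono', hnc', hsd', planar_of_nssd T E hsd'⟩
end
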